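/- For all reals α > 2 and c > 0, the Lebesgue integral over the plane ∫_{ℝ²} 1/(1 + ‖x‖^{α}/c) dx equals 2π²·c^{2/α} / (α·sin(2π/α)). -/

import Mathlib

open MeasureTheory Real Set

lemma beta_refl {s : ℝ} (h0 : 0 < s) (h1 : s < 1) :
    ∫ t in Ioo (0:ℝ) 1, t ^ (s - 1) * (1 - t) ^ (-s) = π / Real.sin (π * s) := by
  have hB : Complex.betaIntegral s (1 - s) = Complex.Gamma s * Complex.Gamma (1 - s) := by
    have := Complex.Gamma_mul_Gamma_eq_betaIntegral (s := (s:ℂ)) (t := 1 - s)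
      (by simpa using h0) (by simp [Complex.sub_re]; exact h1)
    rw [this]; norm_num
  have hrefl : Complex.Gamma s * Complex.Gamma (1 - s) = ↑π / Complex.sin (↑π * s) := by
    simpa using Complex.Gamma_mul_Gamma_one_sub (s : ℂ)
  have hreal : Complex.betaIntegral s (1 - s)
      = ((∫ t in (0:ℝ)..1, t ^ (s - 1) * (1 - t) ^ (-s) : ℝ) : ℂ) := by
    rw [Complex.betaIntegral, ← intervalIntegral.integral_ofReal]
    refine intervalIntegral.integral_congr fun t ht => ?_
    rw [uIcc_of_le zero_le_one] at ht
    push_cast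
    rw [Complex.ofReal_cpow ht.1, Complex.ofReal_cpow (by linarith [ht.2])]
    push_cast
    ring_nf
  have hsin : Complex.sin (↑π * s) = ((Real.sin (π * s) : ℝ) : ℂ) := by
    rw [← Complex.ofReal_mul, Complex.ofReal_sin]
  have key : ((∫ t in (0:ℝ)..1, t ^ (s - 1) * (1 - t) ^ (-s) : ℝ) : ℂ)
      = ((π / Real.sin (π * s) : ℝ) : ℂ) := by
    rw [← hreal, hB, hrefl, hsin, Complex.ofReal_div]
  have h2 := Complex.ofReal_injective key
  rw [← h2, intervalIntegral.integral_of_le zero_le_one, integral_Ioc_eq_integral_Ioo]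

lemma mellin_one_add {s : ℝ} (h0 : 0 < s) (h1 : s < 1) :
    ∫ u in Ioi (0:ℝ), u ^ (s - 1) / (1 + u) = π / Real.sin (π * s) := by
  set f : ℝ → ℝ := fun t => t / (1 - t) with hf
  have himg : f '' Ioo 0 1 = Ioi 0 := by
    ext u
    constructor
    · rintro ⟨t, ⟨ht0, ht1⟩, rfl⟩
      exact div_pos ht0 (by linarith)
    · intro hu
      have hu' : (0:ℝ) < u := hu
      refine ⟨u / (1 + u), ⟨div_pos hu' (by linarith), ?_⟩, ?_⟩
      · rw [div_lt_one (by linarith)]; linarith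
      · simp only [hf]
        rw [div_eq_iff]
        · field_simp; ring
        · have : (0:ℝ) < 1 - u / (1 + u) := by
            rw [sub_pos, div_lt_one (by linarith)]; linarith
          exact this.ne'
  have hderiv : ∀ t ∈ Ioo (0:ℝ) 1, HasDerivWithinAt f (((1 - t) ^ 2)⁻¹) (Ioo 0 1) t := by
    intro t ht
    have hne : (1:ℝ) - t ≠ 0 := (by linarith [ht.2] : (0:ℝ) < 1 - t).ne'
    have H : HasDerivAt f ((1 * (1 - t) - t * (0 - 1)) / (1 - t) ^ 2) t :=
      (hasDerivAt_id t).div ((hasDerivAt_const t (1:ℝ)).sub (hasDerivAt_id t)) hne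
    have : (1 * (1 - t) - t * (0 - 1)) / (1 - t) ^ 2 = ((1 - t) ^ 2)⁻¹ := by
      field_simp; ring
    rw [this] at H
    exact H.hasDerivWithinAt
  have hinj : InjOn f (Ioo 0 1) := by
    intro a ha b hb h
    have hna : (1:ℝ) - a ≠ 0 := by have := ha.2; intro hh; linarith [sub_eq_zero.mp hh]
    have hnb : (1:ℝ) - b ≠ 0 := by have := hb.2; intro hh; linarith [sub_eq_zero.mp hh]
    simp only [hf] at h; field_simp at h
    nlinarith [h]
  rw [← himg, integral_image_eq_integral_abs_deriv_smul measurableSet_Ioo hderiv hinj,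
    ← beta_refl h0 h1]
  refine setIntegral_congr_fun measurableSet_Ioo fun t ht => ?_
  have h0t : (0:ℝ) < t := ht.1
  have h1t : (0:ℝ) < 1 - t := by have := ht.2; linarith
  have e1 : (1:ℝ) + t / (1 - t) = (1 - t)⁻¹ := by field_simp; ring
  have e2 : (t / (1 - t)) ^ (s - 1) = t ^ (s - 1) / (1 - t) ^ (s - 1) :=
    Real.div_rpow h0t.le h1t.le _
  have e3 : (1 - t) ^ (-s) = (1 - t) * (((1 - t) ^ (2:ℝ))⁻¹ / (1 - t) ^ (s - 1)) := by
    rw [show -s = 1 - 2 - (s - 1) by ring, Real.rpow_sub h1t, Real.rpow_sub h1t,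
      Real.rpow_one]
    field_simp
  have hne2 : ((1:ℝ) - t) ^ (2:ℝ) ≠ 0 := (Real.rpow_pos_of_pos h1t _).ne'
  have hneS : ((1:ℝ) - t) ^ (s - 1) ≠ 0 := (Real.rpow_pos_of_pos h1t _).ne'
  simp only [hf, smul_eq_mul, e1, e2, e3, abs_of_nonneg (inv_nonneg.mpr (sq_nonneg (1 - t)))]
  rw [← Real.rpow_two]
  field_simp

lemma radial_integral {α c : ℝ} (hα : 2 < α) (hc : 0 < c) :
    ∫ y in Ioi (0:ℝ), y * (1 / (1 + y ^ α / c))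
      = c ^ (2 / α) * (π / (α * Real.sin (π * (2 / α)))) := by
  have hα0 : (0:ℝ) < α := by linarith
  set b : ℝ := c ^ (α⁻¹) with hbdef
  have hb : 0 < b := Real.rpow_pos_of_pos hc _
  have hbα : b ^ α = c := by
    rw [hbdef, ← Real.rpow_mul hc.le, inv_mul_cancel₀ hα0.ne', Real.rpow_one]
  have hs0 : (0:ℝ) < 2 / α := by positivity
  have hs1 : 2 / α < 1 := (div_lt_one hα0).mpr hα
  -- Step (i): scaling y = b * x
  have step1 : ∫ y in Ioi (0:ℝ), y * (1 / (1 + y ^ α / c))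
      = b ^ 2 * ∫ x in Ioi (0:ℝ), x * (1 / (1 + x ^ α)) := by
    have key := integral_comp_mul_left_Ioi (fun y => y * (1 / (1 + y ^ α / c))) 0 hb
    rw [mul_zero] at key
    have e : ∀ x ∈ Ioi (0:ℝ), (fun x => b * x * (1 / (1 + (b * x) ^ α / c))) x
        = b * (x * (1 / (1 + x ^ α))) := by
      intro x hx
      have hx' : (0:ℝ) < x := hx
      have hbx : (b * x) ^ α = c * x ^ α := by
        rw [Real.mul_rpow hb.le hx'.le, hbα]
      dsimp only
      rw [hbx, show c * x ^ α / c = x ^ α by field_simp]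
      ring
    calc ∫ y in Ioi (0:ℝ), y * (1 / (1 + y ^ α / c))
        = b • ∫ x in Ioi (0:ℝ), (fun y => y * (1 / (1 + y ^ α / c))) (b * x) := by
          rw [key, smul_smul, mul_inv_cancel₀ hb.ne', one_smul]
      _ = b • ∫ x in Ioi (0:ℝ), b * (x * (1 / (1 + x ^ α))) := by
          rw [setIntegral_congr_fun measurableSet_Ioi e]
      _ = b ^ 2 * ∫ x in Ioi (0:ℝ), x * (1 / (1 + x ^ α)) := by
          rw [MeasureTheory.integral_const_mul, smul_eq_mul]
          ring
  -- Step (ii): substitution u = x ^ α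
  have step2 : ∫ x in Ioi (0:ℝ), x * (1 / (1 + x ^ α))
      = α⁻¹ * (π / Real.sin (π * (2 / α))) := by
    have key := integral_comp_rpow_Ioi_of_pos
      (g := fun u => α⁻¹ * u ^ (2 / α - 1) * (1 / (1 + u))) hα0
    have e : ∀ x ∈ Ioi (0:ℝ),
        (α * x ^ (α - 1)) • (α⁻¹ * (x ^ α) ^ (2 / α - 1) * (1 / (1 + x ^ α)))
        = x * (1 / (1 + x ^ α)) := by
      intro x hx
      have hx' : (0:ℝ) < x := hx
      have e1 : (x ^ α) ^ (2 / α - 1) = x ^ (2 - α) := by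
        rw [← Real.rpow_mul hx'.le]
        congr 1
        field_simp
      rw [smul_eq_mul, e1, show α * x ^ (α - 1) * (α⁻¹ * x ^ (2 - α) * (1 / (1 + x ^ α)))
          = (α * α⁻¹) * (x ^ (α - 1) * x ^ (2 - α)) * (1 / (1 + x ^ α)) by ring,
        mul_inv_cancel₀ hα0.ne', ← Real.rpow_add hx', one_mul]
      norm_num
    calc ∫ x in Ioi (0:ℝ), x * (1 / (1 + x ^ α))
        = ∫ x in Ioi (0:ℝ),
            (α * x ^ (α - 1)) • (α⁻¹ * (x ^ α) ^ (2 / α - 1) * (1 / (1 + x ^ α))) :=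
          (setIntegral_congr_fun measurableSet_Ioi e).symm
      _ = ∫ u in Ioi (0:ℝ), α⁻¹ * u ^ (2 / α - 1) * (1 / (1 + u)) := key
      _ = ∫ u in Ioi (0:ℝ), α⁻¹ * (u ^ (2 / α - 1) / (1 + u)) := by
          refine setIntegral_congr_fun measurableSet_Ioi fun u hu => ?_
          ring
      _ = α⁻¹ * (π / Real.sin (π * (2 / α))) := by
          rw [MeasureTheory.integral_const_mul, mellin_one_add hs0 hs1]
  rw [step1, step2]
  have hb2 : b ^ 2 = c ^ (2 / α) := by
    rw [hbdef, ← Real.rpow_natCast (c ^ α⁻¹) 2, ← Real.rpow_mul hc.le]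
    congr 1
    push_cast
    field_simp
  rw [hb2]
  ring

/-- The planar interference integral (equation (15)): for path-loss exponent `α > 2`
and `c > 0`, `∫_{ℝ²} 1/(1 + ‖x‖^α/c) dx = 2π² c^{2/α} / (α sin(2π/α))`. -/
theorem stmt_5 (α c : ℝ) (hα : 2 < α) (hc : 0 < c) :
    ∫ x : EuclideanSpace ℝ (Fin 2), 1 / (1 + ‖x‖ ^ α / c)
      = 2 * Real.pi ^ 2 * c ^ (2 / α) / (α * Real.sin (2 * Real.pi / α)) := by
  have hα0 : (0:ℝ) < α := by linarith
  have hdim : Module.finrank ℝ (EuclideanSpace ℝ (Fin 2)) = 2 := by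
    simp [finrank_euclideanSpace]
  rw [MeasureTheory.integral_fun_norm_addHaar (volume : Measure (EuclideanSpace ℝ (Fin 2)))
    (fun y => 1 / (1 + y ^ α / c))]
  rw [hdim]
  have hball : ((volume : Measure (EuclideanSpace ℝ (Fin 2))) (Metric.ball 0 1)).toReal = π := by
    rw [EuclideanSpace.volume_ball]
    simp only [Fintype.card_fin]
    rw [ENNReal.ofReal_one, one_pow, one_mul]
    rw [show ((2:ℕ):ℝ) / 2 + 1 = 2 by norm_num, Real.Gamma_two]
    rw [ENNReal.toReal_ofReal (by positivity)]
    rw [div_one, sq_sqrt pi_pos.le]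
  rw [measureReal_def, hball]
  have e : ∀ y ∈ Ioi (0:ℝ), y ^ (2 - 1) • (1 / (1 + y ^ α / c))
      = y * (1 / (1 + y ^ α / c)) := by
    intro y hy; simp
  rw [setIntegral_congr_fun measurableSet_Ioi e, radial_integral hα hc]
  have hsin : 0 < Real.sin (2 * π / α) := by
    apply Real.sin_pos_of_pos_of_lt_pi
    · positivity
    · rw [div_lt_iff₀ hα0]
      nlinarith [pi_pos]
  rw [smul_eq_mul, nsmul_eq_mul, show π * (2 / α) = 2 * π / α by ring]
  field_simp
  ring
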